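/- Let μ be a Borel probability measure on the unit circle, β ∈ 𝕋, and set η_μ = ψ_μ/(1+ψ_μ). If lim_{r↑1} η_μ(rβ) = 1, then lim_{r↑1} (η_μ(rβ) − 1)/(r − 1) = 1/μ({1/β}), where the right-hand side is interpreted as ∞ when μ({1/β}) = 0. (This identifies the Julia–Carathéodory derivative of η_μ at β in terms of the atom of μ at 1/β.) -/

import Mathlib

open MeasureTheory Metric Complex Filter Topology

theorem julia_caratheodory_derivative_eta
    (μ : Measure ℂ) [IsProbabilityMeasure μ]
    (hμ : ∀ᵐ t ∂μ, ‖t‖ = 1)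
    (ψ η : ℂ → ℂ)
    (hψ : ∀ z ∈ ball (0:ℂ) 1, ψ z = ∫ t, t * z / (1 - t * z) ∂μ)
    (hη : ∀ z ∈ ball (0:ℂ) 1, η z = ψ z / (1 + ψ z))
    (β : ℂ) (hβ : ‖β‖ = 1)
    (hlim : Tendsto (fun r : ℝ => η ((r : ℂ) * β)) (𝓝[<] (1:ℝ)) (𝓝 1)) :
    (μ {β⁻¹} = 0 →
      Tendsto (fun r : ℝ => ‖(η ((r : ℂ) * β) - 1) / ((r : ℂ) - 1)‖)
        (𝓝[<] (1:ℝ)) atTop) ∧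
    (μ {β⁻¹} ≠ 0 →
      Tendsto (fun r : ℝ => (η ((r : ℂ) * β) - 1) / ((r : ℂ) - 1))
        (𝓝[<] (1:ℝ)) (𝓝 ((1 / (μ {β⁻¹}).toReal : ℝ) : ℂ))) := by
  have hβ0 : β ≠ 0 := fun h => by simp [h] at hβ
  set G : ℝ → ℂ → ℂ := fun r t => (1 - (r:ℂ)) / (1 - t * ((r:ℂ) * β)) with hGdef
  set F : ℝ → ℂ := fun r => (1 - (r:ℂ)) * (1 + ψ ((r:ℂ) * β)) with hFdef
  set c : ℝ := (μ {β⁻¹}).toReal with hcdef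
  have hIoo : Set.Ioo (0:ℝ) 1 ∈ 𝓝[<] (1:ℝ) :=
    Ioo_mem_nhdsLT_of_mem (by constructor <;> norm_num)
  have hnr : ∀ x : ℝ, ‖(x:ℂ)‖ = |x| := fun x => by
    rw [Complex.norm_real, Real.norm_eq_abs]
  -- norm of t * (r β)
  have hw : ∀ r : ℝ, ∀ t : ℂ, ‖t‖ = 1 → ‖t * ((r:ℂ) * β)‖ = |r| := by
    intro r t ht
    rw [norm_mul, norm_mul, ht, hβ, hnr]
    ring
  -- lower bound on denominator
  have hdenom : ∀ r ∈ Set.Ioo (0:ℝ) 1, ∀ t : ℂ, ‖t‖ = 1 →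
      (1 - r : ℝ) ≤ ‖1 - t * ((r:ℂ) * β)‖ := by
    intro r hr t ht
    have h1 : ‖(1:ℂ)‖ - ‖t * ((r:ℂ) * β)‖ ≤ ‖1 - t * ((r:ℂ) * β)‖ :=
      norm_sub_norm_le _ _
    rw [norm_one, hw r t ht, abs_of_pos hr.1] at h1
    exact h1
  have hdenom_ne : ∀ r ∈ Set.Ioo (0:ℝ) 1, ∀ t : ℂ, ‖t‖ = 1 →
      (1 - t * ((r:ℂ) * β)) ≠ 0 := by
    intro r hr t ht
    have := hdenom r hr t ht
    intro h
    rw [h, norm_zero] at this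
    linarith [hr.2]
  -- measurability of G r
  have hGmeas : ∀ r : ℝ, AEStronglyMeasurable (G r) μ := by
    intro r
    apply Measurable.aestronglyMeasurable
    exact measurable_const.div (measurable_const.sub (measurable_id.mul_const _))
  -- bound on G
  have hGbound : ∀ r ∈ Set.Ioo (0:ℝ) 1, ∀ᵐ t ∂μ, ‖G r t‖ ≤ 1 := by
    intro r hr
    filter_upwards [hμ] with t ht
    have hd := hdenom r hr t ht
    have hdpos : (0:ℝ) < ‖1 - t * ((r:ℂ) * β)‖ := by linarith [hr.2]
    rw [hGdef]
    simp only [norm_div]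
    rw [div_le_one hdpos]
    have : ‖(1:ℂ) - (r:ℂ)‖ = 1 - r := by
      rw [show (1:ℂ) - (r:ℂ) = ((1 - r : ℝ) : ℂ) by push_cast; ring,
        hnr, abs_of_pos (by linarith [hr.2])]
    rw [this]
    exact hd
  have hGint : ∀ r ∈ Set.Ioo (0:ℝ) 1, Integrable (G r) μ := by
    intro r hr
    exact Integrable.mono' (integrable_const 1) (hGmeas r)
      (by filter_upwards [hGbound r hr] with t ht; simpa using ht)
  -- the reciprocal integrand
  have hgint : ∀ r ∈ Set.Ioo (0:ℝ) 1,
      Integrable (fun t : ℂ => (1:ℂ) / (1 - t * ((r:ℂ) * β))) μ := by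
    intro r hr
    apply Integrable.mono' (integrable_const ((1 - r)⁻¹ : ℝ))
    · exact (measurable_const.div
        (measurable_const.sub (measurable_id.mul_const _))).aestronglyMeasurable
    · filter_upwards [hμ] with t ht
      have hd := hdenom r hr t ht
      have hdpos : (0:ℝ) < 1 - r := by linarith [hr.2]
      rw [norm_div, norm_one, div_le_iff₀ (by linarith)]
      rw [inv_mul_eq_div, le_div_iff₀ hdpos] at *
      nlinarith
  have hfint : ∀ r ∈ Set.Ioo (0:ℝ) 1,
      Integrable (fun t : ℂ => t * ((r:ℂ) * β) / (1 - t * ((r:ℂ) * β))) μ := by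
    intro r hr
    apply Integrable.mono' (integrable_const (r * (1 - r)⁻¹ : ℝ))
    · exact ((measurable_id.mul_const _).div
        (measurable_const.sub (measurable_id.mul_const _))).aestronglyMeasurable
    · filter_upwards [hμ] with t ht
      have hd := hdenom r hr t ht
      have hdpos : (0:ℝ) < 1 - r := by linarith [hr.2]
      have hdpos' : (0:ℝ) < ‖1 - t * ((r:ℂ) * β)‖ := lt_of_lt_of_le hdpos hd
      rw [norm_div, hw r t ht, abs_of_pos hr.1, div_le_iff₀ hdpos']
      have : r * (1 - r)⁻¹ * (1 - r) = r := by field_simp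
      nlinarith [mul_le_mul_of_nonneg_left hd (le_of_lt hr.1)]
  -- 1 + ψ(rβ) is the integral of the reciprocal
  have hS : ∀ r ∈ Set.Ioo (0:ℝ) 1,
      1 + ψ ((r:ℂ) * β) = ∫ t, (1:ℂ) / (1 - t * ((r:ℂ) * β)) ∂μ := by
    intro r hr
    have hball : ((r:ℂ) * β) ∈ ball (0:ℂ) 1 := by
      rw [mem_ball_zero_iff, norm_mul, hβ, mul_one, hnr, abs_of_pos hr.1]
      exact hr.2
    rw [hψ _ hball]
    have hcongr : ∫ t, (1:ℂ) / (1 - t * ((r:ℂ) * β)) ∂μ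
        = ∫ t, (t * ((r:ℂ) * β) / (1 - t * ((r:ℂ) * β)) + 1) ∂μ := by
      apply integral_congr_ae
      filter_upwards [hμ] with t ht
      have hd := hdenom_ne r hr t ht
      rw [div_add_one hd]; congr 1; ring
    rw [hcongr, integral_add (hfint r hr) (integrable_const 1)]
    simp [measure_univ]
    ring
  -- F r as an integral of G r
  have hFeq : ∀ r ∈ Set.Ioo (0:ℝ) 1, F r = ∫ t, G r t ∂μ := by
    intro r hr
    have hFr : F r = (1 - (r:ℂ)) * (1 + ψ ((r:ℂ) * β)) := rfl
    rw [hFr, hS r hr, ← smul_eq_mul, ← integral_smul]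
    apply integral_congr_ae
    filter_upwards with t
    rw [hGdef]
    simp [smul_eq_mul]
    ring
  -- positivity of real part
  have hRe : ∀ r ∈ Set.Ioo (0:ℝ) 1, 0 < (1 + ψ ((r:ℂ) * β)).re := by
    intro r hr
    have hdpos : (0:ℝ) < 1 - r := by linarith [hr.2]
    rw [hS r hr]
    have hre : ∫ t, ((1:ℂ) / (1 - t * ((r:ℂ) * β))).re ∂μ
        = (∫ t, (1:ℂ) / (1 - t * ((r:ℂ) * β)) ∂μ).re := by
      have := integral_re (𝕜 := ℂ) (hgint r hr)
      simpa using this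
    rw [← hre]
    have hbnd : ∀ᵐ t ∂μ, (1 - r) / 4 ≤ ((1:ℂ) / (1 - t * ((r:ℂ) * β))).re := by
      filter_upwards [hμ] with t ht
      have hd := hdenom r hr t ht
      set d : ℂ := 1 - t * ((r:ℂ) * β) with hddef
      have hdub : ‖d‖ ≤ 2 := by
        have h1 : ‖d‖ ≤ ‖(1:ℂ)‖ + ‖t * ((r:ℂ) * β)‖ := norm_sub_le _ _
        rw [norm_one, hw r t ht, abs_of_pos hr.1] at h1
        linarith [hr.2]
      have hrepos : 1 - r ≤ d.re := by
        have h1 : (t * ((r:ℂ) * β)).re ≤ r := by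
          calc (t * ((r:ℂ) * β)).re ≤ ‖t * ((r:ℂ) * β)‖ := Complex.re_le_norm _
            _ = r := by rw [hw r t ht, abs_of_pos hr.1]
        have : d.re = 1 - (t * ((r:ℂ) * β)).re := by simp [hddef]
        linarith
      have hnormSq : Complex.normSq d ≤ 4 := by
        have : Complex.normSq d = ‖d‖ ^ 2 := by
          rw [Complex.normSq_eq_norm_sq]
        rw [this]
        nlinarith [norm_nonneg d]
      have hnormSqpos : 0 < Complex.normSq d := by
        have : d ≠ 0 := hdenom_ne r hr t ht
        exact Complex.normSq_pos.mpr this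
      rw [one_div, Complex.inv_re, le_div_iff₀ hnormSqpos]
      nlinarith
    calc (0:ℝ) < (1 - r) / 4 := by linarith
      _ = ∫ _t, (1 - r) / 4 ∂μ := by simp [measure_univ]
      _ ≤ ∫ t, ((1:ℂ) / (1 - t * ((r:ℂ) * β))).re ∂μ := by
          apply integral_mono_ae (integrable_const _) _ hbnd
          exact (hgint r hr).re
  have hFne : ∀ r ∈ Set.Ioo (0:ℝ) 1, F r ≠ 0 := by
    intro r hr h
    have hre : (F r).re = (1 - r) * (1 + ψ ((r:ℂ) * β)).re := by
      have hFr : F r = (((1 - r : ℝ)):ℂ) * (1 + ψ ((r:ℂ) * β)) := by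
        show (1 - (r:ℂ)) * _ = _
        push_cast
        ring
      rw [hFr, Complex.re_ofReal_mul]
    rw [h, Complex.zero_re] at hre
    nlinarith [hRe r hr, hr.2]
  -- eventual equality of the difference quotient with (F r)⁻¹
  have heq : ∀ᶠ r : ℝ in 𝓝[<] (1:ℝ),
      (η ((r:ℂ) * β) - 1) / ((r:ℂ) - 1) = (F r)⁻¹ := by
    filter_upwards [hIoo] with r hr
    have hball : ((r:ℂ) * β) ∈ ball (0:ℂ) 1 := by
      rw [mem_ball_zero_iff, norm_mul, hβ, mul_one, hnr, abs_of_pos hr.1]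
      exact hr.2
    have hψne : (1 + ψ ((r:ℂ) * β)) ≠ 0 := by
      intro h
      have := hRe r hr
      rw [h] at this
      simp at this
    have hrne : ((r:ℂ) - 1) ≠ 0 := by
      intro h
      have : (r:ℂ) = 1 := by linear_combination h
      have : r = (1:ℝ) := by exact_mod_cast this
      linarith [hr.2]
    have h1 : η ((r:ℂ) * β) - 1 = -(1 + ψ ((r:ℂ) * β))⁻¹ := by
      rw [hη _ hball]
      field_simp
      ring
    have hFr : F r = (1 - (r:ℂ)) * (1 + ψ ((r:ℂ) * β)) := rfl
    have h1mr : (1:ℂ) - (r:ℂ) ≠ 0 := by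
      intro h
      exact hrne (by linear_combination -h)
    rw [h1, hFr, mul_inv]
    field_simp
    ring
  -- limit of F via dominated convergence
  have hFlim : Tendsto F (𝓝[<] (1:ℝ)) (𝓝 (c:ℂ)) := by
    have hDCT : Tendsto (fun r : ℝ => ∫ t, G r t ∂μ) (𝓝[<] (1:ℝ))
        (𝓝 (∫ t, Set.indicator {β⁻¹} (fun _ => (1:ℂ)) t ∂μ)) := by
      apply tendsto_integral_filter_of_dominated_convergence (fun _ => (1:ℝ))
      · exact Eventually.of_forall hGmeas
      · filter_upwards [hIoo] with r hr
        exact hGbound r hr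
      · exact integrable_const 1
      · filter_upwards [hμ] with t ht
        by_cases htb : t = β⁻¹
        · subst htb
          have hind : Set.indicator {β⁻¹} (fun _ => (1:ℂ)) β⁻¹ = 1 := by
            simp
          rw [hind]
          apply Tendsto.congr' (f₁ := fun _ => (1:ℂ))
          · filter_upwards [hIoo] with r hr
            have hrc : (1:ℂ) - (r:ℂ) ≠ 0 := by
              intro h
              have : (r:ℂ) = 1 := by linear_combination -h
              have : r = (1:ℝ) := by exact_mod_cast this
              linarith [hr.2]
            show (1:ℂ) = (1 - (r:ℂ)) / (1 - β⁻¹ * ((r:ℂ) * β))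
            rw [show β⁻¹ * ((r:ℂ) * β) = (r:ℂ) by
              rw [mul_comm ((r:ℂ)) β, ← mul_assoc, inv_mul_cancel₀ hβ0, one_mul]]
            rw [div_self hrc]
          · exact tendsto_const_nhds
        · have hind : Set.indicator {β⁻¹} (fun _ => (1:ℂ)) t = 0 := by
            simp [htb]
          rw [hind]
          have htβ : 1 - t * β ≠ 0 := by
            intro h
            apply htb
            have h1 : t * β = 1 := by linear_combination -h
            exact eq_inv_of_mul_eq_one_right (by rwa [mul_comm] at h1)
          have hnum : Tendsto (fun r : ℝ => (1:ℂ) - (r:ℂ)) (𝓝[<] (1:ℝ)) (𝓝 0) := by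
            have : Tendsto (fun r : ℝ => (1:ℂ) - (r:ℂ)) (𝓝 (1:ℝ)) (𝓝 ((1:ℂ) - (1:ℂ))) :=
              (continuous_const.sub Complex.continuous_ofReal).tendsto 1
            simpa using this.mono_left nhdsWithin_le_nhds
          have hden : Tendsto (fun r : ℝ => (1:ℂ) - t * ((r:ℂ) * β)) (𝓝[<] (1:ℝ))
              (𝓝 (1 - t * β)) := by
            have : Tendsto (fun r : ℝ => (1:ℂ) - t * ((r:ℂ) * β)) (𝓝 (1:ℝ))
                (𝓝 ((1:ℂ) - t * (((1:ℝ):ℂ) * β))) :=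
              (continuous_const.sub (continuous_const.mul
                ((Complex.continuous_ofReal.mul continuous_const)))).tendsto 1
            simpa using this.mono_left nhdsWithin_le_nhds
          have := hnum.div hden htβ
          rw [zero_div] at this
          exact this
    have hval : ∫ t, Set.indicator {β⁻¹} (fun _ => (1:ℂ)) t ∂μ = (c:ℂ) := by
      rw [integral_indicator_const (1:ℂ) (measurableSet_singleton _)]
      simp [hcdef, Complex.real_smul]
      rfl
    rw [hval] at hDCT
    apply hDCT.congr'
    filter_upwards [hIoo] with r hr
    exact (hFeq r hr).symm
  constructor
  · -- atom is zero
    intro h0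
    have hc0 : c = 0 := by rw [hcdef, h0]; simp
    have hnorm : Tendsto (fun r : ℝ => ‖F r‖) (𝓝[<] (1:ℝ)) (𝓝[>] (0:ℝ)) := by
      rw [tendsto_nhdsWithin_iff]
      constructor
      · have := hFlim.norm
        rw [hc0] at this
        simpa using this
      · filter_upwards [hIoo] with r hr
        exact norm_pos_iff.mpr (hFne r hr)
    have := tendsto_inv_nhdsGT_zero.comp hnorm
    apply this.congr'
    filter_upwards [heq] with r hr
    rw [hr]
    simp [norm_inv]
  · -- atom is nonzero
    intro h0
    have hctop : μ {β⁻¹} ≠ ⊤ := measure_ne_top μ _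
    have hc0 : c ≠ 0 := by
      rw [hcdef]
      exact ENNReal.toReal_ne_zero.mpr ⟨h0, hctop⟩
    have hcC : (c:ℂ) ≠ 0 := by exact_mod_cast hc0
    have := hFlim.inv₀ hcC
    have hgoal : ((1 / c : ℝ) : ℂ) = ((c:ℂ))⁻¹ := by push_cast; rw [one_div]
    rw [hgoal]
    apply this.congr'
    filter_upwards [heq] with r hr
    exact hr.symm
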